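/- For any (α₁, ..., αₙ) ∈ ℂⁿ there exists a monic-up-to-scalar polynomial of degree at most n with P(0)=1, namely the degree-n truncation of exp(-∑_{k≥1} (α_k/k) x^k), whose multiset of roots ρ₁,...,ρ_m (m = deg Pₙ ≤ n, all nonzero) satisfies ∑_i ρᵢ^{-k} = α_k for k = 1, ..., m. In particular every finite complex sequence is realizable as the initial negative power sums of the roots of some polynomial. -/

import Mathlib

noncomputable def expPS (f : PowerSeries ℂ) : PowerSeries ℂ :=
  PowerSeries.mk fun n =>
    ∑ m ∈ Finset.range (n + 1), ((m.factorial : ℂ))⁻¹ * PowerSeries.coeff n (f ^ m)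

noncomputable def logPS (f : PowerSeries ℂ) : PowerSeries ℂ :=
  PowerSeries.mk fun n =>
    ∑ m ∈ Finset.range (n + 1), (-1 : ℂ) ^ (m + 1) * (m : ℂ)⁻¹ * PowerSeries.coeff n ((f - 1) ^ m)

open PowerSeries

private lemma coeff_pow_zero' (f : ℂ⟦X⟧) (hf : constantCoeff f = 0) {j m : ℕ} (h : j < m) :
    coeff j (f ^ m) = 0 :=
  X_pow_dvd_iff.mp (pow_dvd_pow_of_dvd (X_dvd_iff.mpr hf) m) j h

private noncomputable def SN (f : ℂ⟦X⟧) (N : ℕ) : ℂ⟦X⟧ :=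
  ∑ m ∈ Finset.range N, PowerSeries.C ((m.factorial : ℂ))⁻¹ * f ^ m

private lemma coeff_expPS_eq (f : ℂ⟦X⟧) (hf : constantCoeff f = 0) {j N : ℕ} (h : j < N) :
    coeff j (expPS f) = coeff j (SN f N) := by
  have : coeff j (SN f N) = ∑ m ∈ Finset.range N, ((m.factorial : ℂ))⁻¹ * coeff j (f ^ m) := by
    simp [SN]
  rw [this, expPS, coeff_mk]
  apply Finset.sum_subset
  · intro x hx
    simp only [Finset.mem_range] at *
    omega
  · intro x hx hx'
    simp only [Finset.mem_range] at *
    rw [coeff_pow_zero' f hf (by omega)]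
    ring

private lemma deriv_SN (f : ℂ⟦X⟧) (n : ℕ) :
    d⁄dX ℂ (SN f (n + 2)) = SN f (n + 1) * d⁄dX ℂ f := by
  rw [SN, map_sum, Finset.sum_range_succ' _ (n + 1)]
  have h0 : d⁄dX ℂ (PowerSeries.C ((Nat.factorial 0 : ℂ))⁻¹ * f ^ 0) = 0 := by
    simp
  rw [h0, add_zero, SN, Finset.sum_mul]
  apply Finset.sum_congr rfl
  intro m _
  rw [Derivation.leibniz, Derivation.leibniz_pow, PowerSeries.derivative_C, smul_zero, add_zero]
  have h1 : ((m : ℂ) + 1) ≠ 0 := Nat.cast_add_one_ne_zero m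
  have hfac : (((m + 1).factorial : ℂ))⁻¹ * ((m : ℂ) + 1) = ((m.factorial : ℂ))⁻¹ := by
    rw [Nat.factorial_succ]
    push_cast
    rw [mul_inv, mul_comm ((m : ℂ) + 1)⁻¹, mul_assoc, inv_mul_cancel₀ h1, mul_one]
  simp only [smul_eq_mul, Nat.add_sub_cancel, nsmul_eq_mul]
  rw [← mul_assoc, ← map_natCast (PowerSeries.C) (m + 1), ← map_mul]
  push_cast
  rw [hfac, mul_assoc]

private lemma expPS_deriv (f : ℂ⟦X⟧) (hf : constantCoeff f = 0) :
    d⁄dX ℂ (expPS f) = d⁄dX ℂ f * expPS f := by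
  ext n
  rw [PowerSeries.coeff_derivative, coeff_expPS_eq f hf (show n + 1 < n + 2 by omega),
    ← PowerSeries.coeff_derivative, deriv_SN, mul_comm (d⁄dX ℂ f),
    PowerSeries.coeff_mul, PowerSeries.coeff_mul]
  apply Finset.sum_congr rfl
  intro p hp
  rw [Finset.HasAntidiagonal.mem_antidiagonal] at hp
  rw [coeff_expPS_eq f hf (show p.1 < n + 1 by omega)]

private lemma geom_mul (c : ℂ) :
    (1 - PowerSeries.C c * X) * (PowerSeries.mk fun k => c ^ k) = 1 := by
  ext n
  rw [sub_mul, one_mul, map_sub, mul_assoc]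
  cases n with
  | zero => simp
  | succ n =>
    rw [PowerSeries.coeff_C_mul, PowerSeries.coeff_succ_X_mul]
    simp [pow_succ, mul_comm]

private lemma geom_inv (c : ℂ) :
    (1 - PowerSeries.C c * X)⁻¹ = PowerSeries.mk fun k => c ^ k := by
  rw [PowerSeries.inv_eq_iff_mul_eq_one (by simp), mul_comm]
  exact geom_mul c

private lemma deriv_lin (c : ℂ) :
    d⁄dX ℂ (1 - PowerSeries.C c * X) = - PowerSeries.C c := by
  rw [map_sub, Derivation.map_one_eq_zero, Derivation.leibniz]
  simp

private lemma logderiv_prod (s : Multiset ℂ) :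
    constantCoeff (s.map fun c => (1 : ℂ⟦X⟧) - PowerSeries.C c * X).prod = 1 ∧
    d⁄dX ℂ (s.map fun c => (1 : ℂ⟦X⟧) - PowerSeries.C c * X).prod *
      ((s.map fun c => (1 : ℂ⟦X⟧) - PowerSeries.C c * X).prod)⁻¹ =
      - PowerSeries.mk fun j => (s.map fun c => c ^ (j + 1)).sum := by
  induction s using Multiset.induction with
  | empty =>
    constructor
    · simp
    · ext j; simp
  | cons c t ih =>
    obtain ⟨ih1, ih2⟩ := ih
    set u : ℂ⟦X⟧ := 1 - PowerSeries.C c * X with hu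
    set Qt : ℂ⟦X⟧ := (t.map fun c => (1 : ℂ⟦X⟧) - PowerSeries.C c * X).prod with hQt
    have hcu : constantCoeff u = 1 := by simp [hu]
    have hmap : ((c ::ₘ t).map fun c => (1 : ℂ⟦X⟧) - PowerSeries.C c * X).prod = u * Qt := by
      rw [Multiset.map_cons, Multiset.prod_cons]
    rw [hmap]
    constructor
    · rw [map_mul, hcu, ih1, mul_one]
    · have hinv : (u * Qt)⁻¹ = Qt⁻¹ * u⁻¹ := PowerSeries.mul_inv_rev u Qt
      have huu : u * u⁻¹ = 1 := PowerSeries.mul_inv_cancel u (by rw [hcu]; norm_num)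
      have hqq : Qt * Qt⁻¹ = 1 := PowerSeries.mul_inv_cancel Qt (by rw [ih1]; norm_num)
      rw [Derivation.leibniz, hinv]
      have expand : (u • d⁄dX ℂ Qt + Qt • d⁄dX ℂ u) * (Qt⁻¹ * u⁻¹)
          = (d⁄dX ℂ Qt * Qt⁻¹) * (u * u⁻¹) + (d⁄dX ℂ u * u⁻¹) * (Qt * Qt⁻¹) := by
        simp only [smul_eq_mul]; ring
      rw [expand, huu, hqq, mul_one, mul_one, ih2, deriv_lin, geom_inv]
      ext j
      simp [pow_succ, mul_comm, add_comm]

private lemma lin_factor (ρ : ℂ) (hρ : ρ ≠ 0) :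
    Polynomial.X - Polynomial.C ρ = Polynomial.C (-ρ) * (1 - Polynomial.C ρ⁻¹ * Polynomial.X) := by
  rw [mul_sub, mul_one, ← mul_assoc, ← Polynomial.C_mul, neg_mul, mul_inv_cancel₀ hρ]
  simp
  ring

theorem stmt4 (n : ℕ) (α : ℕ → ℂ) :
    ∃ P : Polynomial ℂ,
      P = PowerSeries.trunc (n + 1)
          (expPS (PowerSeries.mk fun k => if k = 0 then 0 else -(α k) / (k : ℂ))) ∧
      P.eval 0 = 1 ∧ P.natDegree ≤ n ∧ (∀ ρ ∈ P.roots, ρ ≠ 0) ∧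
      ∀ k, 1 ≤ k → k ≤ P.natDegree → (P.roots.map fun ρ => ρ⁻¹ ^ k).sum = α k := by
  set f : ℂ⟦X⟧ := PowerSeries.mk fun k => if k = 0 then 0 else -(α k) / (k : ℂ) with hf
  have hf0 : constantCoeff f = 0 := by rw [hf]; simp
  set E : ℂ⟦X⟧ := expPS f with hE
  set P : Polynomial ℂ := trunc (n + 1) E with hPdef
  have hc0 : P.coeff 0 = 1 := by
    rw [hPdef, PowerSeries.coeff_trunc]
    simp [hE, expPS]
  have heval : P.eval 0 = 1 := by
    rw [← Polynomial.coeff_zero_eq_eval_zero, hc0]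
  have hP0 : P ≠ 0 := fun h => by simp [h] at heval
  have hdeg : P.natDegree ≤ n := by
    have h := degree_trunc_lt E (n + 1)
    rw [← hPdef, ← Polynomial.natDegree_lt_iff_degree_lt hP0] at h
    omega
  have hroots0 : ∀ ρ ∈ P.roots, ρ ≠ 0 := by
    intro ρ hρ h0
    have := Polynomial.isRoot_of_mem_roots hρ
    rw [h0] at this
    rw [Polynomial.IsRoot.def] at this
    rw [this] at heval
    exact one_ne_zero heval.symm
  -- factorization of P into linear factors normalized at 0
  have hsplit : P = Polynomial.C P.leadingCoeff *
      (P.roots.map fun a => Polynomial.X - Polynomial.C a).prod :=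
    Polynomial.Splits.eq_prod_roots (IsAlgClosed.splits P)
  set V : Polynomial ℂ := (P.roots.map fun ρ => 1 - Polynomial.C ρ⁻¹ * Polynomial.X).prod with hV
  have hmap : (P.roots.map fun a => Polynomial.X - Polynomial.C a) =
      P.roots.map fun ρ => Polynomial.C (-ρ) * (1 - Polynomial.C ρ⁻¹ * Polynomial.X) :=
    Multiset.map_congr rfl fun ρ hρ => lin_factor ρ (hroots0 ρ hρ)
  have hPV : P = Polynomial.C (P.leadingCoeff * (P.roots.map fun ρ => -ρ).prod) * V := by
    rw [map_mul]
    calc P = Polynomial.C P.leadingCoeff *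
        (P.roots.map fun ρ => Polynomial.C (-ρ) * (1 - Polynomial.C ρ⁻¹ * Polynomial.X)).prod := by
          conv_lhs => rw [hsplit, hmap]
      _ = _ := by
          rw [Multiset.prod_map_mul, mul_assoc, ← hV]
          congr 1
          rw [map_multiset_prod, Multiset.map_map]
          rfl
  have hV0 : V.eval 0 = 1 := by
    rw [hV, Polynomial.eval_multiset_prod, Multiset.map_map]
    have : (P.roots.map ((Polynomial.eval 0) ∘ fun ρ => 1 - Polynomial.C ρ⁻¹ * Polynomial.X)) =
        P.roots.map fun _ => (1 : ℂ) := Multiset.map_congr rfl fun ρ _ => by simp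
    rw [this]
    simp
  have hconst : P.leadingCoeff * (P.roots.map fun ρ => -ρ).prod = 1 := by
    have := heval
    rw [hPV, Polynomial.eval_mul, Polynomial.eval_C, hV0, mul_one] at this
    exact this
  have hPV' : P = V := by rw [hPV, hconst, map_one, one_mul]
  -- power series version of the factorization
  set s : Multiset ℂ := P.roots.map fun ρ => ρ⁻¹ with hs
  have hQfact : (P : ℂ⟦X⟧) = (s.map fun c => (1 : ℂ⟦X⟧) - PowerSeries.C c * X).prod := by
    rw [hs, Multiset.map_map]
    conv_lhs => rw [hPV', hV]
    rw [← Polynomial.coeToPowerSeries.ringHom_apply, map_multiset_prod, Multiset.map_map]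
    apply congrArg
    apply Multiset.map_congr rfl
    intro ρ _
    simp only [Function.comp_apply, map_sub, map_one, map_mul,
      Polynomial.coeToPowerSeries.ringHom_apply, Polynomial.coe_C, Polynomial.coe_X]
  obtain ⟨hcQ, hld⟩ := logderiv_prod s
  rw [← hQfact] at hcQ hld
  -- E' = f' E
  have hE' : d⁄dX ℂ E = d⁄dX ℂ f * E := hE ▸ expPS_deriv f hf0
  -- X^(n+1) divides E - P
  have hdvd : (X : ℂ⟦X⟧) ^ (n + 1) ∣ (E - (P : ℂ⟦X⟧)) := by
    rw [X_pow_dvd_iff]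
    intro m hm
    rw [map_sub, Polynomial.coeff_coe, hPdef, PowerSeries.coeff_trunc, if_pos hm, sub_self]
  obtain ⟨R, hR⟩ := hdvd
  have hdvd2 : (X : ℂ⟦X⟧) ^ n ∣ (d⁄dX ℂ (P : ℂ⟦X⟧) - d⁄dX ℂ f * (P : ℂ⟦X⟧)) := by
    have key : d⁄dX ℂ (P : ℂ⟦X⟧) - d⁄dX ℂ f * (P : ℂ⟦X⟧) =
        (d⁄dX ℂ E - d⁄dX ℂ f * E) - d⁄dX ℂ (E - (P : ℂ⟦X⟧)) + d⁄dX ℂ f * (E - (P : ℂ⟦X⟧)) := by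
      rw [map_sub]; ring
    rw [key, hE', sub_self, zero_sub, hR]
    have hXn : (X : ℂ⟦X⟧) ^ n ∣ (X : ℂ⟦X⟧) ^ (n + 1) := pow_dvd_pow _ (Nat.le_succ n)
    have h1 : (X : ℂ⟦X⟧) ^ n ∣ d⁄dX ℂ ((X : ℂ⟦X⟧) ^ (n + 1) * R) := by
      rw [Derivation.leibniz, Derivation.leibniz_pow, PowerSeries.derivative_X]
      simp only [smul_eq_mul, nsmul_eq_mul, Nat.add_sub_cancel, mul_one]
      exact dvd_add (hXn.mul_right _) ((dvd_mul_left _ _).mul_left R)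
    exact dvd_add (dvd_neg.mpr h1) ((hXn.trans (Dvd.intro R rfl)).mul_left _)
  have hcQ0 : constantCoeff (P : ℂ⟦X⟧) ≠ 0 := by rw [hcQ]; norm_num
  have hdvd3 : (X : ℂ⟦X⟧) ^ n ∣ (d⁄dX ℂ (P : ℂ⟦X⟧) * ((P : ℂ⟦X⟧))⁻¹ - d⁄dX ℂ f) := by
    have hrw : d⁄dX ℂ (P : ℂ⟦X⟧) * ((P : ℂ⟦X⟧))⁻¹ - d⁄dX ℂ f
        = (d⁄dX ℂ (P : ℂ⟦X⟧) - d⁄dX ℂ f * (P : ℂ⟦X⟧)) * ((P : ℂ⟦X⟧))⁻¹ := by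
      rw [sub_mul, mul_assoc, PowerSeries.mul_inv_cancel _ hcQ0, mul_one]
    rw [hrw]
    exact hdvd2.mul_right _
  refine ⟨P, hPdef, heval, hdeg, hroots0, ?_⟩
  intro k hk1 hk2
  have hkn : k - 1 < n := by omega
  have hk' : k - 1 + 1 = k := Nat.sub_add_cancel hk1
  have hkc : ((k - 1 : ℕ) : ℂ) + 1 = (k : ℂ) := by exact_mod_cast congrArg (Nat.cast : ℕ → ℂ) hk'
  have hkc0 : (k : ℂ) ≠ 0 := Nat.cast_ne_zero.mpr (by omega)
  have h0 := X_pow_dvd_iff.mp hdvd3 (k - 1) hkn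
  rw [map_sub, hld, map_neg, PowerSeries.coeff_mk, PowerSeries.coeff_derivative, hk', hkc,
    hf, PowerSeries.coeff_mk, if_neg (show ¬ k = 0 by omega), div_mul_cancel₀ _ hkc0,
    hs, Multiset.map_map] at h0
  have hgoal : (P.roots.map fun ρ => ρ⁻¹ ^ k).sum =
      (P.roots.map ((fun c => c ^ k) ∘ fun ρ => ρ⁻¹)).sum := rfl
  rw [hgoal]
  linear_combination -h0
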